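/- Let X = ℕ₀ with d(m,n) = |m − n| and T(n) = ⌊n/2⌋. Then for all pairwise distinct m,n,p ∈ X, P(Tm,Tn,Tp) ≤ (3/4)·P(m,n,p), i.e., T is a uniform triangle-perimeter contraction with constant 3/4. -/
import Mathlib

lemma nat_abs_eq (a b : ℕ) : |(a:ℝ) - b| = (((a - b) + (b - a) : ℕ) : ℝ) := by
  rcases le_total a b with h | h
  · rw [abs_sub_comm, abs_of_nonneg (sub_nonneg.2 (Nat.cast_le.2 h)),
      Nat.sub_eq_zero_of_le h]
    push_cast [h]
    ring
  · rw [abs_of_nonneg (sub_nonneg.2 (Nat.cast_le.2 h)), Nat.sub_eq_zero_of_le h]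
    push_cast [h]
    ring

lemma key_nat (m n p : ℕ) (h1 : m ≠ n) (h2 : n ≠ p) (h3 : m ≠ p) :
    4 * (((m/2 - n/2) + (n/2 - m/2)) + ((n/2 - p/2) + (p/2 - n/2)) + ((m/2 - p/2) + (p/2 - m/2)))
      ≤ 3 * (((m - n) + (n - m)) + ((n - p) + (p - n)) + ((m - p) + (p - m))) := by
  omega

theorem stmt_9 :
    ∀ m n p : ℕ, m ≠ n → n ≠ p → m ≠ p →
      dist (m / 2) (n / 2) + dist (n / 2) (p / 2) + dist (m / 2) (p / 2) ≤
        (3/4) * (dist m n + dist n p + dist m p) := by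
  intro m n p h1 h2 h3
  simp only [Nat.dist_eq, nat_abs_eq]
  rw [div_mul_eq_mul_div, le_div_iff₀ (by norm_num), mul_comm]
  exact_mod_cast key_nat m n p h1 h2 h3
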